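/- Let K be the open triangle in ℝ² with vertices (0,0), (1,0), (1,1), i.e., K = {(x,t) : 0 < t < x < 1}. For every w ∈ C¹(closure of K), the inflow trace τᵢw(x) = w(x,0) satisfies ∫₀¹ x·|τᵢw(x)|² dx ≤ 2(‖w‖²_{L²(K)} + ‖∂ₜw‖²_{L²(K)}). -/

import Mathlib

open MeasureTheory Set

lemma mem_closure_triangle {x t : ℝ} (ht : 0 ≤ t) (htx : t ≤ x) (hx : x ≤ 1) :
    (x, t) ∈ closure {p : ℝ × ℝ | 0 < p.2 ∧ p.2 < p.1 ∧ p.1 < 1} := by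
  have hf : Continuous (fun θ : ℝ => ((1 - θ) * x + θ / 2, (1 - θ) * t + θ / 4)) := by
    continuity
  have htend : Filter.Tendsto (fun n : ℕ => ((1 - 1/(n+1:ℝ)) * x + (1/(n+1:ℝ)) / 2,
      (1 - 1/(n+1:ℝ)) * t + (1/(n+1:ℝ)) / 4)) Filter.atTop (nhds (x, t)) := by
    have h0 : Filter.Tendsto (fun n : ℕ => 1/(n+1:ℝ)) Filter.atTop (nhds 0) :=
      tendsto_one_div_add_atTop_nhds_zero_nat
    have := (hf.tendsto 0).comp h0
    simpa [Function.comp_def] using this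
  refine mem_closure_of_tendsto htend ?_
  filter_upwards with n
  set θ : ℝ := 1/(n+1:ℝ) with hθ
  have hθ0 : 0 < θ := by positivity
  have hθ1 : θ ≤ 1 := by
    rw [hθ]
    rw [div_le_one (by positivity)]
    linarith [Nat.cast_nonneg (α := ℝ) n]
  refine ⟨by nlinarith, by nlinarith, by nlinarith⟩

theorem stmt0 (K : Set (ℝ × ℝ))
    (hK : K = {p : ℝ × ℝ | 0 < p.2 ∧ p.2 < p.1 ∧ p.1 < 1})
    (w wt : ℝ × ℝ → ℝ)
    (hw : ContinuousOn w (closure K))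
    (hwt : ContinuousOn wt (closure K))
    (hderiv : ∀ x ∈ Icc (0:ℝ) 1, ∀ t ∈ Icc 0 x,
      HasDerivWithinAt (fun s => w (x, s)) (wt (x, t)) (Icc 0 x) t) :
    (∫ x in Ioo (0:ℝ) 1, x * (w (x, 0))^2)
      ≤ 2 * ((∫ p in K, (w p)^2) + ∫ p in K, (wt p)^2) := by
  have hKmeas : MeasurableSet K := by
    rw [hK]
    exact (measurableSet_lt measurable_const measurable_snd).inter
      ((measurableSet_lt measurable_snd measurable_fst).inter
        (measurableSet_lt measurable_fst measurable_const))
  have hcl : ∀ x t : ℝ, 0 ≤ t → t ≤ x → x ≤ 1 → (x, t) ∈ closure K := by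
    intro x t ht htx hx
    rw [hK]; exact mem_closure_triangle ht htx hx
  have hKcpt : IsCompact (closure K) := by
    apply Metric.isCompact_of_isClosed_isBounded isClosed_closure
    apply Bornology.IsBounded.closure
    have hsub : K ⊆ Icc (0:ℝ) 1 ×ˢ Icc (0:ℝ) 1 := by
      rw [hK]
      rintro ⟨a, b⟩ ⟨h1, h2, h3⟩
      exact ⟨⟨by linarith, by linarith⟩, ⟨by linarith, by linarith⟩⟩
    exact ((Metric.isBounded_Icc (0:ℝ) 1).prod (Metric.isBounded_Icc (0:ℝ) 1)).subset hsub
  set f2 : ℝ × ℝ → ℝ := fun p => (w p)^2 + (wt p)^2 with hf2def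
  have hint_w2 : IntegrableOn (fun p => (w p)^2) K volume :=
    ((hw.pow 2).integrableOn_compact hKcpt).mono_set subset_closure
  have hint_wt2 : IntegrableOn (fun p => (wt p)^2) K volume :=
    ((hwt.pow 2).integrableOn_compact hKcpt).mono_set subset_closure
  have hint_f2 : IntegrableOn f2 K volume := hint_w2.add hint_wt2
  have hind : Integrable (K.indicator f2) volume := (integrable_indicator_iff hKmeas).mpr hint_f2
  have hind' : Integrable (K.indicator f2) ((volume : Measure ℝ).prod volume) := by
    rwa [← Measure.volume_eq_prod]
  -- slice description
  have hslice : ∀ x ∈ Ioo (0:ℝ) 1, (fun t => K.indicator f2 (x, t)) = (Ioo 0 x).indicator (fun t => f2 (x, t)) := by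
    intro x hx
    funext t
    by_cases ht : t ∈ Ioo (0:ℝ) x
    · rw [indicator_of_mem ht, indicator_of_mem (by rw [hK]; exact ⟨ht.1, ht.2, hx.2⟩)]
    · rw [indicator_of_notMem ht, indicator_of_notMem (by
        rw [hK]; rintro ⟨h1, h2, h3⟩; exact ht ⟨h1, h2⟩)]
  have hG : (fun x => ∫ t, K.indicator f2 (x, t)) =
      (Ioo (0:ℝ) 1).indicator (fun x => ∫ t in Ioo 0 x, f2 (x, t)) := by
    funext x
    by_cases hx : x ∈ Ioo (0:ℝ) 1
    · rw [indicator_of_mem hx, hslice x hx, integral_indicator measurableSet_Ioo]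
    · rw [indicator_of_notMem hx]
      have hz : ∀ t, K.indicator f2 (x, t) = 0 := by
        intro t
        apply indicator_of_notMem
        rw [hK]
        rintro ⟨h1, h2, h3⟩
        exact hx ⟨lt_trans h1 h2, h3⟩
      simp [hz]
  have hFub : ∫ p in K, f2 p = ∫ x in Ioo (0:ℝ) 1, ∫ t in Ioo 0 x, f2 (x, t) := by
    rw [← integral_indicator hKmeas, Measure.volume_eq_prod, integral_prod _ hind', hG,
      integral_indicator measurableSet_Ioo]
  have hGint : IntegrableOn (fun x => ∫ t in Ioo 0 x, f2 (x, t)) (Ioo (0:ℝ) 1) volume := by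
    have := hind'.integral_prod_left
    rw [hG] at this
    exact (integrable_indicator_iff measurableSet_Ioo).mp this
  have key : ∀ x ∈ Ioo (0:ℝ) 1, x * (w (x, 0))^2 ≤ 2 * ∫ t in Ioo 0 x, f2 (x, t) := by
    intro x hx
    have hx0 : 0 < x := hx.1
    have hmap : MapsTo (fun s : ℝ => (x, s)) (Icc 0 x) (closure K) := by
      intro s hs
      exact hcl x s hs.1 hs.2 hx.2.le
    have cw : ContinuousOn (fun s => w (x, s)) (Icc 0 x) :=
      hw.comp (Continuous.prodMk_right x).continuousOn hmap
    have cwt : ContinuousOn (fun s => wt (x, s)) (Icc 0 x) :=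
      hwt.comp (Continuous.prodMk_right x).continuousOn hmap
    have cf : ContinuousOn (fun s => f2 (x, s)) (Icc 0 x) := (cw.pow 2).add (cwt.pow 2)
    set I := ∫ s in (0:ℝ)..x, f2 (x, s) with hI
    have hIf2int : IntervalIntegrable (fun s => f2 (x, s)) volume 0 x :=
      ContinuousOn.intervalIntegrable (by rwa [uIcc_of_le hx0.le])
    have hInn : 0 ≤ I := intervalIntegral.integral_nonneg hx0.le (fun s _ => by positivity)
    have hpt : ∀ t ∈ Icc (0:ℝ) x, (w (x, 0))^2 ≤ (w (x, t))^2 + I := by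
      intro t ht
      have hIcc : Icc (0:ℝ) t ⊆ Icc 0 x := Icc_subset_Icc le_rfl ht.2
      have hcont_g : ContinuousOn (fun s => (w (x, s))^2) (Icc 0 t) := (cw.mono hIcc).pow 2
      have hd : ∀ s ∈ Ioo (0:ℝ) t, HasDerivAt (fun s => (w (x, s))^2)
          (2 * w (x, s) * wt (x, s)) s := by
        intro s hs
        have hsm : s ∈ Icc (0:ℝ) x := ⟨hs.1.le, hs.2.le.trans ht.2⟩
        have h0 : HasDerivAt (fun s => w (x, s)) (wt (x, s)) s := by
          refine (hderiv x ⟨hx0.le, hx.2.le⟩ s hsm).hasDerivAt ?_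
          exact Icc_mem_nhds hs.1 (lt_of_lt_of_le hs.2 ht.2)
        have := h0.pow 2
        simpa [mul_comm, mul_assoc, mul_left_comm, Pi.pow_def] using this
      have hint2 : IntervalIntegrable (fun s => 2 * w (x, s) * wt (x, s)) volume 0 t := by
        apply ContinuousOn.intervalIntegrable
        rw [uIcc_of_le ht.1]
        exact (continuousOn_const.mul (cw.mono hIcc)).mul (cwt.mono hIcc)
      have hFTC : ∫ s in (0:ℝ)..t, 2 * w (x, s) * wt (x, s)
          = (w (x, t))^2 - (w (x, 0))^2 :=
        intervalIntegral.integral_eq_sub_of_hasDeriv_right_of_le ht.1 hcont_g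
          (fun s hs => (hd s hs).hasDerivWithinAt) hint2
      have hIf2int_t : IntervalIntegrable (fun s => f2 (x, s)) volume 0 t := by
        apply ContinuousOn.intervalIntegrable
        rw [uIcc_of_le ht.1]
        exact cf.mono hIcc
      have hb : -(∫ s in (0:ℝ)..t, f2 (x, s)) ≤ ∫ s in (0:ℝ)..t, 2 * w (x, s) * wt (x, s) := by
        rw [← intervalIntegral.integral_neg]
        apply intervalIntegral.integral_mono_on ht.1 hIf2int_t.neg hint2
        intro s hs
        simp only [Pi.neg_apply, hf2def]
        nlinarith [sq_nonneg (w (x, s) + wt (x, s))]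
      have hsplit : ∫ s in (0:ℝ)..t, f2 (x, s) ≤ I := by
        have hIf2int_tx : IntervalIntegrable (fun s => f2 (x, s)) volume t x := by
          apply ContinuousOn.intervalIntegrable
          rw [uIcc_of_le ht.2]
          exact cf.mono (Icc_subset_Icc ht.1 le_rfl)
        have hadd := intervalIntegral.integral_add_adjacent_intervals hIf2int_t hIf2int_tx
        have hnn : 0 ≤ ∫ s in t..x, f2 (x, s) :=
          intervalIntegral.integral_nonneg ht.2 (fun s _ => by positivity)
        rw [hI]
        linarith
      linarith
    -- integrate over t ∈ Ioo 0 x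
    have hIooInt : IntegrableOn (fun t => (w (x, t))^2) (Ioo 0 x) volume :=
      ((cw.pow 2).integrableOn_compact isCompact_Icc).mono_set Ioo_subset_Icc_self
    have hIooIntf : IntegrableOn (fun t => f2 (x, t)) (Ioo 0 x) volume :=
      (cf.integrableOn_compact isCompact_Icc).mono_set Ioo_subset_Icc_self
    have hIeq : ∫ t in Ioo (0:ℝ) x, f2 (x, t) = I := by
      rw [hI, intervalIntegral.integral_of_le hx0.le, integral_Ioc_eq_integral_Ioo]
    have hvol : (volume (Ioo (0:ℝ) x)).toReal = x := by
      rw [Real.volume_Ioo, sub_zero, ENNReal.toReal_ofReal hx0.le]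
    have step1 : x * (w (x, 0))^2 = ∫ t in Ioo (0:ℝ) x, (w (x, 0))^2 := by
      rw [setIntegral_const, measureReal_def, hvol, smul_eq_mul]
    have step2 : (∫ t in Ioo (0:ℝ) x, (w (x, 0))^2)
        ≤ ∫ t in Ioo (0:ℝ) x, ((w (x, t))^2 + I) := by
      apply setIntegral_mono_on ((integrableOn_const_iff).mpr (Or.inr (by
        rw [Real.volume_Ioo]; exact ENNReal.ofReal_lt_top))) (hIooInt.add
        ((integrableOn_const_iff).mpr (Or.inr (by rw [Real.volume_Ioo]; exact ENNReal.ofReal_lt_top))))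
        measurableSet_Ioo
      intro t htm
      exact hpt t ⟨htm.1.le, htm.2.le⟩
    have step3 : (∫ t in Ioo (0:ℝ) x, ((w (x, t))^2 + I))
        = (∫ t in Ioo (0:ℝ) x, (w (x, t))^2) + x * I := by
      rw [integral_add hIooInt ((integrableOn_const_iff).mpr (Or.inr (by
        rw [Real.volume_Ioo]; exact ENNReal.ofReal_lt_top))), setIntegral_const, measureReal_def, hvol, smul_eq_mul]
    have step4 : (∫ t in Ioo (0:ℝ) x, (w (x, t))^2) ≤ I := by
      rw [← hIeq]
      apply setIntegral_mono_on hIooInt hIooIntf measurableSet_Ioo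
      intro t _
      simp only [hf2def]
      nlinarith [sq_nonneg (wt (x, t))]
    have hxI : x * I ≤ I := by nlinarith [hx.2]
    rw [hIeq]
    linarith
  have hLHSint : IntegrableOn (fun x => x * (w (x, 0))^2) (Ioo (0:ℝ) 1) volume := by
    have cw0 : ContinuousOn (fun x : ℝ => x * (w (x, 0))^2) (Icc 0 1) := by
      exact continuousOn_id.mul ((hw.comp
        ((continuous_id.prodMk continuous_const).continuousOn)
        (fun x hxm => hcl x 0 le_rfl hxm.1 hxm.2)).pow 2)
    exact (cw0.integrableOn_compact isCompact_Icc).mono_set Ioo_subset_Icc_self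
  have hmono : (∫ x in Ioo (0:ℝ) 1, x * (w (x, 0))^2)
      ≤ ∫ x in Ioo (0:ℝ) 1, 2 * ∫ t in Ioo 0 x, f2 (x, t) :=
    setIntegral_mono_on hLHSint (hGint.const_mul 2) measurableSet_Ioo key
  have hfin : (∫ x in Ioo (0:ℝ) 1, 2 * ∫ t in Ioo 0 x, f2 (x, t))
      = 2 * ((∫ p in K, (w p)^2) + ∫ p in K, (wt p)^2) := by
    rw [MeasureTheory.integral_const_mul, ← hFub, hf2def, integral_add hint_w2 hint_wt2]
  linarith
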